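/- Let Q_1, …, Q_s be nontrivial finite groups and let m be a natural number, and let G = F_m * Q_1 * ⋯ * Q_s be the free product, with φ : G → Q_1 × ⋯ × Q_s the homomorphism that is trivial on F_m and maps each factor Q_p identically onto the p-th coordinate. If m + s ≥ 2 and it is not the case that m = 0, s = 2 and |Q_1| = |Q_2| = 2, then the kernel of φ admits a surjective group homomorphism onto the free group F_2 of rank 2 (equivalently, it is a free group of rank at least 2). -/

import Mathlib

open Monoid

section ActL

variable (P T : Type*) [Group P] [Group T]

/-- Left-translation action of `P` on functions `P → T`. -/
def actL : P →* MulAut (P → T) where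
  toFun u :=
    { toFun := fun f x => f (u⁻¹ * x)
      invFun := fun f x => f (u * x)
      left_inv := fun f => funext fun x => by simp
      right_inv := fun f => funext fun x => by simp
      map_mul' := fun f g => rfl }
  map_one' := by ext f x; simp
  map_mul' u v := by ext f x; simp [mul_assoc]

variable {P T}

@[simp] lemma actL_apply (u : P) (f : P → T) (x : P) :
    actL P T u f x = f (u⁻¹ * x) := rfl

@[simp] lemma actL_inv_apply (u : P) (f : P → T) (x : P) :
    ((actL P T) u)⁻¹ f x = f (u * x) := rfl

/-- Evaluation of the nonabelian "commutator cocycle" in the wreath-type product. -/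
lemma sdp_comm_eval (k : P → T) (u v : P) (huv : u * v = v * u) :
    ((SemidirectProduct.inl k * SemidirectProduct.inr u * (SemidirectProduct.inl k)⁻¹) *
     SemidirectProduct.inr v *
     (SemidirectProduct.inl k * SemidirectProduct.inr u * (SemidirectProduct.inl k)⁻¹)⁻¹ *
     (SemidirectProduct.inr v)⁻¹ : (P → T) ⋊[actL P T] P).left 1
    = k 1 * (k u⁻¹)⁻¹ * (k (u⁻¹ * v⁻¹) * (k v⁻¹)⁻¹) := by
  have h1 : v⁻¹ * u⁻¹ = u⁻¹ * v⁻¹ := by rw [← mul_inv_rev, ← mul_inv_rev, huv]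
  have h2 : u * (v⁻¹ * u⁻¹) = v⁻¹ := by rw [h1, mul_inv_cancel_left]
  simp [mul_assoc, h1, h2]
  exact congrArg k (mul_inv_cancel_left u v⁻¹)

end ActL

section Main

variable {m s : ℕ} {Q : Fin s → Type} [∀ p, Group (Q p)]

/-- The lifted homomorphism `G →* (P → F₂) ⋊ P`. -/
def rho (f : Fin m → ((∀ p, Q p) → FreeGroup (Fin 2)))
    (h : Fin s → ((∀ p, Q p) → FreeGroup (Fin 2))) :
    Monoid.Coprod (FreeGroup (Fin m)) (Monoid.CoprodI Q) →*
      ((∀ p, Q p) → FreeGroup (Fin 2)) ⋊[actL (∀ p, Q p) (FreeGroup (Fin 2))] (∀ p, Q p) :=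
  Coprod.lift (FreeGroup.lift fun i => SemidirectProduct.inl (f i))
    (CoprodI.lift fun p =>
      ((MulAut.conj (SemidirectProduct.inl (h p))).toMonoidHom.comp
        (SemidirectProduct.inr.comp (MonoidHom.mulSingle Q p))))

lemma rightHom_comp_rho (f : Fin m → ((∀ p, Q p) → FreeGroup (Fin 2)))
    (h : Fin s → ((∀ p, Q p) → FreeGroup (Fin 2))) :
    SemidirectProduct.rightHom.comp (rho f h)
      = Coprod.lift 1 (CoprodI.lift fun p => MonoidHom.mulSingle Q p) := by
  apply Coprod.hom_ext
  · ext i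
    simp [rho]
  · refine MonoidHom.ext fun x => ?_
    simp only [MonoidHom.comp_apply, Coprod.lift_apply_inr]
    induction x using CoprodI.induction_on with
    | of p q => simp [rho]
    | one => simp
    | mul x y hx hy => simp only [map_mul, hx, hy]

lemma rho_inl (f : Fin m → ((∀ p, Q p) → FreeGroup (Fin 2)))
    (h : Fin s → ((∀ p, Q p) → FreeGroup (Fin 2))) (i : Fin m) :
    rho f h (Coprod.inl (FreeGroup.of i)) = SemidirectProduct.inl (f i) := by
  simp [rho]

lemma rho_of (f : Fin m → ((∀ p, Q p) → FreeGroup (Fin 2)))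
    (h : Fin s → ((∀ p, Q p) → FreeGroup (Fin 2))) (p : Fin s) (q : Q p) :
    rho f h (Coprod.inr (CoprodI.of q))
      = SemidirectProduct.inl (h p) * SemidirectProduct.inr (Pi.mulSingle p q) *
          (SemidirectProduct.inl (h p))⁻¹ := by
  simp [rho, MulAut.conj, mul_assoc]

theorem exists_psi
    (φ : Monoid.Coprod (FreeGroup (Fin m)) (Monoid.CoprodI Q) →* (∀ p, Q p))
    (hφ : φ = Monoid.Coprod.lift 1 (Monoid.CoprodI.lift fun p => MonoidHom.mulSingle Q p))
    (f : Fin m → ((∀ p, Q p) → FreeGroup (Fin 2)))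
    (h : Fin s → ((∀ p, Q p) → FreeGroup (Fin 2)))
    (g₁ g₂ : Monoid.Coprod (FreeGroup (Fin m)) (Monoid.CoprodI Q))
    (hg₁ : g₁ ∈ φ.ker) (hg₂ : g₂ ∈ φ.ker)
    (hv₁ : ((rho f h) g₁).left 1 = FreeGroup.of 0)
    (hv₂ : ((rho f h) g₂).left 1 = FreeGroup.of 1) :
    ∃ ψ : φ.ker →* FreeGroup (Fin 2), Function.Surjective ψ := by
  subst hφ
  have hright : ∀ g : (Monoid.Coprod.lift 1
      (Monoid.CoprodI.lift fun p => MonoidHom.mulSingle Q p)).ker,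
      ((rho f h) g.1).right = 1 := by
    intro g
    have h1 := DFunLike.congr_fun (rightHom_comp_rho f h) g.1
    have h2 : (Monoid.Coprod.lift 1
      (Monoid.CoprodI.lift fun p => MonoidHom.mulSingle Q p)) g.1 = 1 := g.2
    rw [h2] at h1
    simpa using h1
  let ψ : (Monoid.Coprod.lift 1
      (Monoid.CoprodI.lift fun p => MonoidHom.mulSingle Q p)).ker →* FreeGroup (Fin 2) :=
    { toFun := fun k => ((rho f h) k.1).left 1
      map_one' := by simp
      map_mul' := fun k l => by
        have hk := hright k
        simp [SemidirectProduct.mul_left, hk] }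
  refine ⟨ψ, fun w => ?_⟩
  have hw : w ∈ ψ.range := by
    refine SetLike.le_def.mp ?_ (Subgroup.mem_top w)
    rw [← FreeGroup.closure_range_of (Fin 2), Subgroup.closure_le]
    rintro w ⟨i, rfl⟩
    fin_cases i
    · exact ⟨⟨g₁, hg₁⟩, hv₁⟩
    · exact ⟨⟨g₂, hg₂⟩, hv₂⟩
  obtain ⟨x, hx⟩ := hw
  exact ⟨x, hx⟩

lemma ne_d {p₀ p₁ : Fin s} (hp : p₀ ≠ p₁) {q : Q p₀} (hq : q ≠ 1) (r : Q p₁)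
    (x : ∀ p, Q p) (hx : x p₀ = 1) :
    x ≠ (Pi.mulSingle p₀ q : ∀ p, Q p)⁻¹ * (Pi.mulSingle p₁ r : ∀ p, Q p)⁻¹ := by
  intro H
  apply hq
  have h1 := congrFun H p₀
  rw [hx] at h1
  simp only [Pi.mul_apply, Pi.inv_apply, Pi.mulSingle_eq_same,
    Pi.mulSingle_eq_of_ne hp, inv_one, mul_one] at h1
  rw [← inv_inv q, ← h1, inv_one]

lemma ne_d' {p₀ p₁ : Fin s} (hp : p₀ ≠ p₁) (q : Q p₀) {r : Q p₁} (hr : r ≠ 1)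
    (x : ∀ p, Q p) (hx : x p₁ = 1) :
    x ≠ (Pi.mulSingle p₀ q : ∀ p, Q p)⁻¹ * (Pi.mulSingle p₁ r : ∀ p, Q p)⁻¹ := by
  intro H
  apply hr
  have h1 := congrFun H p₁
  rw [hx] at h1
  simp only [Pi.mul_apply, Pi.inv_apply, Pi.mulSingle_eq_same,
    Pi.mulSingle_eq_of_ne (Ne.symm hp), inv_one, one_mul] at h1
  rw [← inv_inv r, ← h1, inv_one]

end Main

/-- Let `Q 0, …, Q (s-1)` be nontrivial finite groups, `m : ℕ`, and let
`G = FreeGroup (Fin m) ∗ (CoprodI Q)` with `φ : G →* ∀ p, Q p` the homomorphism that is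
trivial on the free factor and maps each `Q p` identically onto the `p`-th coordinate.
If `m + s ≥ 2` and it is not the case that `m = 0`, `s = 2` and `|Q 0| = |Q 1| = 2`, then
the kernel of `φ` surjects onto the free group of rank 2 (equivalently, it is a free
group of rank at least 2). -/
theorem stmt1 (m s : ℕ) (Q : Fin s → Type) [∀ p, Group (Q p)] [∀ p, Fintype (Q p)]
    [∀ p, Nontrivial (Q p)]
    (φ : Monoid.Coprod (FreeGroup (Fin m)) (Monoid.CoprodI Q) →* (∀ p, Q p))
    (hφ : φ = Monoid.Coprod.lift 1 (Monoid.CoprodI.lift fun p => MonoidHom.mulSingle Q p))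
    (h2 : 2 ≤ m + s)
    (hne : ¬(m = 0 ∧ s = 2 ∧ ∀ p, Fintype.card (Q p) = 2)) :
    ∃ ψ : φ.ker →* FreeGroup (Fin 2), Function.Surjective ψ := by
  classical
  rcases Nat.eq_zero_or_pos m with hm0 | hm1
  · -- m = 0, so s ≥ 2 and commutators are used
    subst hm0
    obtain ⟨p₀, p₁, p₂, hp₁, hp₂, q, q', r, r', hq, hq', hr, hr', hd⟩ :
        ∃ (p₀ p₁ p₂ : Fin s), p₀ ≠ p₁ ∧ p₀ ≠ p₂ ∧
          ∃ (q q' : Q p₀) (r : Q p₁) (r' : Q p₂),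
          q ≠ 1 ∧ q' ≠ 1 ∧ r ≠ 1 ∧ r' ≠ 1 ∧
          (Pi.mulSingle p₀ q : ∀ p, Q p)⁻¹ * (Pi.mulSingle p₁ r : ∀ p, Q p)⁻¹ ≠
            (Pi.mulSingle p₀ q' : ∀ p, Q p)⁻¹ * (Pi.mulSingle p₂ r' : ∀ p, Q p)⁻¹ := by
      by_cases hcard : ∃ p₀, 3 ≤ Fintype.card (Q p₀)
      · obtain ⟨p₀, hc⟩ := hcard
        have hnt : Nontrivial (Fin s) := Fin.nontrivial_iff_two_le.mpr (by omega)
        obtain ⟨p₁, hp₁⟩ := exists_ne p₀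
        obtain ⟨q, hq⟩ := exists_ne (1 : Q p₀)
        obtain ⟨q', hq'⟩ : ∃ q' : Q p₀, q' ∉ ({1, q} : Finset (Q p₀)) := by
          by_contra hcon
          push_neg at hcon
          have hsub : (Finset.univ : Finset (Q p₀)) ⊆ {1, q} := fun x _ => hcon x
          have h3 := Finset.card_le_card hsub
          rw [Finset.card_univ] at h3
          have h4 : ({1, q} : Finset (Q p₀)).card ≤ 2 :=
            (Finset.card_insert_le _ _).trans (by simp)
          omega
        simp only [Finset.mem_insert, Finset.mem_singleton, not_or] at hq'
        obtain ⟨r, hr⟩ := exists_ne (1 : Q p₁)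
        refine ⟨p₀, p₁, p₁, Ne.symm hp₁, Ne.symm hp₁, q, q', r, r,
          hq, hq'.1, hr, hr, fun H => hq'.2 ?_⟩
        have h1 := congrFun H p₀
        simp only [Pi.mul_apply, Pi.inv_apply, Pi.mulSingle_eq_same,
          Pi.mulSingle_eq_of_ne (Ne.symm hp₁), inv_one, mul_one] at h1
        rw [← inv_inv q', ← h1, inv_inv]
      · have hall : ∀ p, Fintype.card (Q p) = 2 := by
          intro p
          have h1 : 1 < Fintype.card (Q p) := Fintype.one_lt_card
          push_neg at hcard
          have := hcard p
          omega
        have hs3 : 3 ≤ s := by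
          rcases Nat.lt_or_ge s 3 with hlt | hge
          · exact absurd ⟨rfl, by omega, hall⟩ hne
          · exact hge
        set p₀ : Fin s := ⟨0, by omega⟩
        set p₁ : Fin s := ⟨1, by omega⟩
        set p₂ : Fin s := ⟨2, by omega⟩
        have h01 : p₀ ≠ p₁ := by simp [p₀, p₁, Fin.ext_iff]
        have h02 : p₀ ≠ p₂ := by simp [p₀, p₂, Fin.ext_iff]
        have h12 : p₁ ≠ p₂ := by simp [p₁, p₂, Fin.ext_iff]
        obtain ⟨q, hq⟩ := exists_ne (1 : Q p₀)
        obtain ⟨r, hr⟩ := exists_ne (1 : Q p₁)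
        obtain ⟨r', hr'⟩ := exists_ne (1 : Q p₂)
        refine ⟨p₀, p₁, p₂, h01, h02, q, q, r, r', hq, hq, hr, hr', fun H => hr ?_⟩
        have h1 := congrFun H p₁
        simp only [Pi.mul_apply, Pi.inv_apply, Pi.mulSingle_eq_same,
          Pi.mulSingle_eq_of_ne (Ne.symm h01), Pi.mulSingle_eq_of_ne h12,
          inv_one, one_mul, mul_one] at h1
        rw [← inv_inv r, h1, inv_one]
    set u : ∀ p, Q p := Pi.mulSingle p₀ q with hu_def
    set v : ∀ p, Q p := Pi.mulSingle p₁ r with hv_def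
    set u' : ∀ p, Q p := Pi.mulSingle p₀ q' with hu'_def
    set v' : ∀ p, Q p := Pi.mulSingle p₂ r' with hv'_def
    set d₁ : ∀ p, Q p := u⁻¹ * v⁻¹ with hd₁_def
    set d₂ : ∀ p, Q p := u'⁻¹ * v'⁻¹ with hd₂_def
    set k₀ : (∀ p, Q p) → FreeGroup (Fin 2) :=
      fun x => if x = d₁ then FreeGroup.of 0 else if x = d₂ then FreeGroup.of 1 else 1
      with hk₀_def
    have hk : ∀ x : ∀ p, Q p, x ≠ d₁ → x ≠ d₂ → k₀ x = 1 := by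
      intro x hx1 hx2
      simp [hk₀_def, hx1, hx2]
    have hk1 : k₀ 1 = 1 :=
      hk 1 (ne_d hp₁ hq r 1 rfl) (ne_d hp₂ hq' r' 1 rfl)
    have hkd₁ : k₀ d₁ = FreeGroup.of 0 := by simp [hk₀_def]
    have hkd₂ : k₀ d₂ = FreeGroup.of 1 := by simp [hk₀_def, Ne.symm hd]
    have hku : k₀ u⁻¹ = 1 :=
      hk u⁻¹ (ne_d' hp₁ q hr u⁻¹ (by simp [hu_def, Pi.mulSingle_eq_of_ne (Ne.symm hp₁)]))
        (ne_d' hp₂ q' hr' u⁻¹ (by simp [hu_def, Pi.mulSingle_eq_of_ne (Ne.symm hp₂)]))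
    have hku' : k₀ u'⁻¹ = 1 :=
      hk u'⁻¹ (ne_d' hp₁ q hr u'⁻¹ (by simp [hu'_def, Pi.mulSingle_eq_of_ne (Ne.symm hp₁)]))
        (ne_d' hp₂ q' hr' u'⁻¹ (by simp [hu'_def, Pi.mulSingle_eq_of_ne (Ne.symm hp₂)]))
    have hkv : k₀ v⁻¹ = 1 :=
      hk v⁻¹ (ne_d hp₁ hq r v⁻¹ (by simp [hv_def, Pi.mulSingle_eq_of_ne hp₁]))
        (ne_d hp₂ hq' r' v⁻¹ (by simp [hv_def, Pi.mulSingle_eq_of_ne hp₁]))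
    have hkv' : k₀ v'⁻¹ = 1 :=
      hk v'⁻¹ (ne_d hp₁ hq r v'⁻¹ (by simp [hv'_def, Pi.mulSingle_eq_of_ne hp₂]))
        (ne_d hp₂ hq' r' v'⁻¹ (by simp [hv'_def, Pi.mulSingle_eq_of_ne hp₂]))
    have huv : u * v = v * u := (Pi.mulSingle_commute hp₁ q r).eq
    have huv' : u' * v' = v' * u' := (Pi.mulSingle_commute hp₂ q' r').eq
    set hfun : Fin s → ((∀ p, Q p) → FreeGroup (Fin 2)) :=
      fun p => if p = p₀ then k₀ else 1 with hfun_def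
    have hfp₀ : hfun p₀ = k₀ := by simp [hfun_def]
    have hfp₁ : hfun p₁ = 1 := by simp [hfun_def, Ne.symm hp₁]
    have hfp₂ : hfun p₂ = 1 := by simp [hfun_def, Ne.symm hp₂]
    refine exists_psi φ hφ (fun i => absurd i.2 (by omega)) hfun
      (Coprod.inr (CoprodI.of q) * Coprod.inr (CoprodI.of r) *
        (Coprod.inr (CoprodI.of q))⁻¹ * (Coprod.inr (CoprodI.of r))⁻¹)
      (Coprod.inr (CoprodI.of q') * Coprod.inr (CoprodI.of r') *
        (Coprod.inr (CoprodI.of q'))⁻¹ * (Coprod.inr (CoprodI.of r'))⁻¹)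
      ?_ ?_ ?_ ?_
    · rw [MonoidHom.mem_ker, hφ]
      simp only [map_mul, map_inv, Coprod.lift_apply_inr, CoprodI.lift_of,
        MonoidHom.mulSingle_apply]
      rw [huv]
      show v * u * u⁻¹ * v⁻¹ = 1
      group
    · rw [MonoidHom.mem_ker, hφ]
      simp only [map_mul, map_inv, Coprod.lift_apply_inr, CoprodI.lift_of,
        MonoidHom.mulSingle_apply]
      rw [huv']
      show v' * u' * u'⁻¹ * v'⁻¹ = 1
      group
    · rw [map_mul, map_mul, map_mul, map_inv, map_inv, rho_of, rho_of, hfp₀, hfp₁]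
      rw [show (Pi.mulSingle p₀ q : ∀ p, Q p) = u from rfl,
        show (Pi.mulSingle p₁ r : ∀ p, Q p) = v from rfl]
      simp only [map_one, one_mul, mul_one, inv_one]
      rw [sdp_comm_eval k₀ u v huv, hk1, hku, hkv, ← hd₁_def, hkd₁]
      simp
    · rw [map_mul, map_mul, map_mul, map_inv, map_inv, rho_of, rho_of, hfp₀, hfp₂]
      rw [show (Pi.mulSingle p₀ q' : ∀ p, Q p) = u' from rfl,
        show (Pi.mulSingle p₂ r' : ∀ p, Q p) = v' from rfl]
      simp only [map_one, one_mul, mul_one, inv_one]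
      rw [sdp_comm_eval k₀ u' v' huv', hk1, hku', hkv', ← hd₂_def, hkd₂]
      simp
  · rcases Nat.eq_zero_or_pos s with hs0 | hs1
    · -- s = 0, m ≥ 2
      subst hs0
      have hm2 : 2 ≤ m := by omega
      refine exists_psi φ hφ
        (fun i _ => if i = (⟨0, by omega⟩ : Fin m) then FreeGroup.of 0 else FreeGroup.of 1)
        (fun p => absurd p.2 (by omega))
        (Coprod.inl (FreeGroup.of ⟨0, by omega⟩)) (Coprod.inl (FreeGroup.of ⟨1, by omega⟩))
        ?_ ?_ ?_ ?_
      · rw [MonoidHom.mem_ker, hφ]; simp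
      · rw [MonoidHom.mem_ker, hφ]; simp
      · rw [rho_inl]; simp
      · rw [rho_inl]; simp [Fin.ext_iff]
    · -- m ≥ 1, s ≥ 1
      set p₀ : Fin s := ⟨0, by omega⟩
      obtain ⟨q, hq⟩ := exists_ne (1 : Q p₀)
      set u : ∀ p, Q p := Pi.mulSingle p₀ q with hu_def
      have hune : u⁻¹ ≠ 1 := by
        intro H
        apply hq
        have h1 := congrFun H p₀
        simp only [Pi.inv_apply, hu_def, Pi.mulSingle_eq_same, Pi.one_apply] at h1
        rw [← inv_inv q, h1, inv_one]
      set i₀ : Fin m := ⟨0, by omega⟩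
      refine exists_psi φ hφ
        (fun _ x => if x = 1 then FreeGroup.of 0 else
          if x = u⁻¹ then FreeGroup.of 1 else 1)
        (fun _ => 1)
        (Coprod.inl (FreeGroup.of i₀))
        (Coprod.inr (CoprodI.of q) * Coprod.inl (FreeGroup.of i₀) *
          (Coprod.inr (CoprodI.of q))⁻¹)
        ?_ ?_ ?_ ?_
      · rw [MonoidHom.mem_ker, hφ]; simp
      · rw [MonoidHom.mem_ker, hφ]; simp
      · rw [rho_inl]; simp
      · rw [map_mul, map_mul, map_inv, rho_inl, rho_of]
        simp [hune, hq, hu_def]
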